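/- Let $\tau : [N] \to \mathbb{R}_{\geq 0}$ be scores and $w : [N] \to \mathbb{R}_{\geq 0}$ weights, not all zero on indices with positive weight. Let $\tau_{\max} = \max_{i : w_i > 0} \tau_i > 0$ and define $w'_i = (1 - \tau_i/\tau_{\max}) w_i$. Given a partition $[N] = S_G \sqcup S_B$ with $\sum_{i\in S_G} w_i \tau_i < \sum_{i \in S_B} w_i \tau_i$, then: (a) $w'_i \leq w_i$ for all $i$; (b) the support of $w'$ is a strict subset of the support of $w$; and (c) $\sum_{i\in S_G}(w_i - w'_i) < \sum_{i\in S_B}(w_i - w'_i)$. -/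
import Mathlib


theorem stmt_8 (N : ℕ) (τ w : Fin N → ℝ) (hτ : ∀ i, 0 ≤ τ i) (hw : ∀ i, 0 ≤ w i)
    (τmax : ℝ) (hτmax_pos : 0 < τmax)
    (hub : ∀ i, 0 < w i → τ i ≤ τmax)
    (hach : ∃ i, 0 < w i ∧ τ i = τmax)
    (SG : Finset (Fin N))
    (hlt : ∑ i ∈ SG, w i * τ i < ∑ i ∈ SGᶜ, w i * τ i)
    (w' : Fin N → ℝ) (hw' : ∀ i, w' i = (1 - τ i / τmax) * w i) :
    (∀ i, w' i ≤ w i) ∧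
    {i | w' i ≠ 0} ⊂ {i | w i ≠ 0} ∧
    ∑ i ∈ SG, (w i - w' i) < ∑ i ∈ SGᶜ, (w i - w' i) := by
  have hdiff : ∀ i, w i - w' i = w i * τ i / τmax := by
    intro i; rw [hw' i]; field_simp; ring
  refine ⟨?_, ?_, ?_⟩
  · intro i
    have : 0 ≤ w i * τ i / τmax :=
      div_nonneg (mul_nonneg (hw i) (hτ i)) hτmax_pos.le
    linarith [hdiff i]
  · obtain ⟨j, hj, hjτ⟩ := hach
    constructor
    · intro i hi
      simp only [Set.mem_setOf_eq] at *
      intro h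
      exact hi (by rw [hw' i, h, mul_zero])
    · intro hsub
      have : w' j ≠ 0 := hsub (by simp only [Set.mem_setOf_eq]; exact ne_of_gt hj)
      apply this
      rw [hw' j, hjτ, div_self hτmax_pos.ne', sub_self, zero_mul]
  · have e : ∀ S : Finset (Fin N), ∑ i ∈ S, (w i - w' i) = (∑ i ∈ S, w i * τ i) / τmax := by
      intro S
      rw [Finset.sum_div]
      exact Finset.sum_congr rfl fun i _ => hdiff i
    rw [e, e]
    gcongr
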